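/- Let f : A → B be a homomorphism of abelian groups whose kernel and cokernel both have finite exponent. Then for any abelian group C, the homomorphism f ⊗ id_C : A ⊗ C → B ⊗ C also has kernel and cokernel of finite exponent. -/

import Mathlib

open TensorProduct

/-- If `f : A → B` has kernel and cokernel of finite exponent, then so does
`f ⊗ id_C : A ⊗ C → B ⊗ C` for every abelian group `C`. -/
theorem stmt_1 (A B C : Type) [AddCommGroup A] [AddCommGroup B] [AddCommGroup C]
    (f : A →ₗ[ℤ] B)
    (hker : ∃ n : ℕ, 0 < n ∧ ∀ a ∈ LinearMap.ker f, (n : ℤ) • a = 0)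
    (hcoker : ∃ n : ℕ, 0 < n ∧ ∀ b : B ⧸ LinearMap.range f, (n : ℤ) • b = 0) :
    (∃ n : ℕ, 0 < n ∧ ∀ x ∈ LinearMap.ker (TensorProduct.map f (LinearMap.id (M := C))),
        (n : ℤ) • x = 0) ∧
    (∃ n : ℕ, 0 < n ∧ ∀ y : (B ⊗[ℤ] C) ⧸
        LinearMap.range (TensorProduct.map f (LinearMap.id (M := C))),
        (n : ℤ) • y = 0) := by
  obtain ⟨m, hm, hmker⟩ := hker
  obtain ⟨n, hn, hncoker⟩ := hcoker
  set K := LinearMap.ker f with hK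
  -- every element of B multiplied by n lies in range f
  have hrange : ∀ b : B, ∃ a : A, f a = (n : ℤ) • b := by
    intro b
    have := hncoker (Submodule.Quotient.mk b)
    rw [← Submodule.Quotient.mk_smul, Submodule.Quotient.mk_eq_zero] at this
    exact this
  -- the induced injective map fbar : A ⧸ K → B
  set fbar : (A ⧸ K) →ₗ[ℤ] B := K.liftQ f le_rfl with hfbar
  have hfbar_inj : Function.Injective fbar := by
    rw [← LinearMap.ker_eq_bot]
    exact Submodule.ker_liftQ_eq_bot' K f rfl
  have hfbar_mk : ∀ a : A, fbar (Submodule.Quotient.mk a) = f a := fun a => rfl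
  -- quasi-inverse g : B → A ⧸ K with fbar ∘ g = n • id
  have hg : ∃ g : B →ₗ[ℤ] A ⧸ K, ∀ b : B, fbar (g b) = (n : ℤ) • b := by
    choose s hs using hrange
    refine ⟨{ toFun := fun b => Submodule.Quotient.mk (s b),
              map_add' := ?_, map_smul' := ?_ }, fun b => hs b⟩
    · intro x y
      apply hfbar_inj
      simp only [map_add, hfbar_mk, hs]
      rw [smul_add]
    · intro z x
      apply hfbar_inj
      simp only [map_smul, hfbar_mk, hs, RingHom.id_apply]
      rw [smul_comm]
  obtain ⟨g, hgspec⟩ := hg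
  have hcomp : g ∘ₗ fbar = (n : ℤ) • LinearMap.id := by
    ext x
    apply hfbar_inj
    simp only [LinearMap.comp_apply, LinearMap.smul_apply, LinearMap.id_apply,
      hgspec, map_smul]
  -- notation for tensored maps
  set F := TensorProduct.map f (LinearMap.id (M := C)) with hF
  have hFr : F = LinearMap.rTensor C f := rfl
  have hfactor : f = fbar ∘ₗ K.mkQ := by ext a; rfl
  constructor
  · -- kernel part: killed by m * n
    refine ⟨m * n, Nat.mul_pos hm hn, ?_⟩
    intro x hx
    rw [LinearMap.mem_ker] at hx
    -- image of x in (A⧸K) ⊗ C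
    have hx' : LinearMap.rTensor C fbar (LinearMap.rTensor C K.mkQ x) = 0 := by
      rw [← LinearMap.comp_apply, ← LinearMap.rTensor_comp, ← hfactor, ← hFr, hx]
    -- n kills it
    have h1 : (n : ℤ) • LinearMap.rTensor C K.mkQ x = 0 := by
      have := congrArg (LinearMap.rTensor C g) hx'
      rw [← LinearMap.comp_apply, ← LinearMap.rTensor_comp, hcomp,
        LinearMap.rTensor_smul, LinearMap.rTensor_id, map_zero] at this
      simpa only [LinearMap.smul_apply, LinearMap.id_apply] using this
    -- so n • x is in the image of K ⊗ C
    have h2 : LinearMap.rTensor C K.mkQ ((n : ℤ) • x) = 0 := by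
      rw [map_smul, h1]
    have h3 : (n : ℤ) • x ∈ LinearMap.range (LinearMap.rTensor C K.subtype) := by
      rw [← rTensor_mkQ C K]
      exact h2
    obtain ⟨w, hw⟩ := h3
    -- every element of K ⊗ C is killed by m
    have hKtor : ∀ w : K ⊗[ℤ] C, (m : ℤ) • w = 0 := by
      intro w
      induction w with
      | zero => simp
      | tmul k c =>
        have hk : (m : ℤ) • k = 0 := Subtype.ext (hmker k k.2)
        rw [TensorProduct.smul_tmul', hk, TensorProduct.zero_tmul]
      | add u v hu hv => rw [smul_add, hu, hv, add_zero]
    have : (m : ℤ) • ((n : ℤ) • x) = 0 := by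
      rw [← hw, ← map_smul, hKtor, map_zero]
    rw [Nat.cast_mul, mul_smul]
    exact this
  · -- cokernel part: killed by n
    refine ⟨n, hn, ?_⟩
    intro y
    obtain ⟨z, rfl⟩ := Submodule.Quotient.mk_surjective _ y
    change Submodule.Quotient.mk ((n : ℤ) • z) = _
    rw [Submodule.Quotient.mk_eq_zero]
    induction z with
    | zero => simp
    | tmul b c =>
      obtain ⟨a, ha⟩ := hrange b
      exact ⟨a ⊗ₜ c, by simp [hF, ha, TensorProduct.smul_tmul']⟩
    | add u v hu hv =>
      rw [smul_add]
      exact Submodule.add_mem _ hu hv
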